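/- Let $\eta \ge \eta_0$ where $\eta_0 = -\left(\frac{1}{2} + \operatorname{csch} 2\right)\operatorname{sech} 1$. Then for all $z$ in the open unit disc, $\operatorname{Re}\left(\eta \cosh\sqrt{z} + \sqrt{z}\,\operatorname{csch}(2\sqrt{z})\right) > -\frac{1}{2}$. -/

import Mathlib

open Metric

/-- `cosh √z` as a power series. -/
noncomputable def coshSqrt (z : ℂ) : ℂ := ∑' n : ℕ, z ^ n / (Nat.factorial (2 * n) : ℂ)

/-- `√z · csch(2√z)`, with value `1/2` at `0`. -/
noncomputable def sqrtCsch (z : ℂ) : ℂ :=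
  if z = 0 then 1 / 2 else z ^ (1/2 : ℂ) / Complex.sinh (2 * z ^ (1/2 : ℂ))

-- exp series
lemma hasSum_exp' (w : ℂ) : HasSum (fun n : ℕ => w ^ n / n.factorial) (Complex.exp w) := by
  rw [Complex.exp_eq_exp_ℂ]
  exact NormedSpace.expSeries_div_hasSum_exp w

lemma hasSum_cosh' (w : ℂ) :
    HasSum (fun n : ℕ => w ^ (2 * n) / (Nat.factorial (2 * n) : ℂ)) (Complex.cosh w) := by
  have h1 : HasSum (fun n : ℕ => (w ^ n + (-w) ^ n) / (2 * n.factorial)) (Complex.cosh w) := by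
    rw [show Complex.cosh w = (Complex.exp w + Complex.exp (-w)) / 2 from rfl]
    have := ((hasSum_exp' w).add (hasSum_exp' (-w))).div_const 2
    convert this using 2 with n
    · rfl
    ring
  have h2 : Function.Injective (fun n : ℕ => 2 * n) := fun a b h => by dsimp at h; omega
  have h3 := (h2.hasSum_iff (f := fun n : ℕ => (w ^ n + (-w) ^ n) / (2 * n.factorial)) ?_).mpr h1
  · have he : (fun n : ℕ => w ^ (2 * n) / (Nat.factorial (2 * n) : ℂ))
        = (fun n : ℕ => (w ^ n + (-w) ^ n) / (2 * n.factorial)) ∘ (fun n : ℕ => 2 * n) := by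
      funext n
      simp only [Function.comp]
      rw [(even_two_mul n).neg_pow]
      have : ((2 * n).factorial : ℂ) ≠ 0 := Nat.cast_ne_zero.mpr (Nat.factorial_ne_zero _)
      field_simp
      ring
    rw [he]
    exact h3
  · intro n hn
    have hodd : Odd n := by
      rcases Nat.even_or_odd n with he | ho
      · exact absurd he (by rintro ⟨k, hk⟩; exact hn ⟨k, by dsimp; omega⟩ |>.elim)
      · exact ho
    rw [Odd.neg_pow hodd]
    ring

lemma hasSum_sinh' (w : ℂ) :
    HasSum (fun n : ℕ => w ^ (2 * n + 1) / (Nat.factorial (2 * n + 1) : ℂ)) (Complex.sinh w) := by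
  have h1 : HasSum (fun n : ℕ => (w ^ n - (-w) ^ n) / (2 * n.factorial)) (Complex.sinh w) := by
    rw [show Complex.sinh w = (Complex.exp w - Complex.exp (-w)) / 2 from rfl]
    have := ((hasSum_exp' w).sub (hasSum_exp' (-w))).div_const 2
    convert this using 2 with n
    · rfl
    ring
  have h2 : Function.Injective (fun n : ℕ => 2 * n + 1) := fun a b h => by dsimp at h; omega
  have h3 := (h2.hasSum_iff (f := fun n : ℕ => (w ^ n - (-w) ^ n) / (2 * n.factorial)) ?_).mpr h1
  · have he : (fun n : ℕ => w ^ (2 * n + 1) / (Nat.factorial (2 * n + 1) : ℂ))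
        = (fun n : ℕ => (w ^ n - (-w) ^ n) / (2 * n.factorial)) ∘ (fun n : ℕ => 2 * n + 1) := by
      funext n
      simp only [Function.comp]
      rw [Odd.neg_pow (⟨n, by ring⟩ : Odd (2 * n + 1))]
      have : ((2 * n + 1).factorial : ℂ) ≠ 0 := Nat.cast_ne_zero.mpr (Nat.factorial_ne_zero _)
      field_simp
      ring
    rw [he]
    exact h3
  · intro n hn
    have heven : Even n := by
      rcases Nat.even_or_odd n with he | ho
      · exact he
      · exact absurd ho (by rintro ⟨k, hk⟩; exact hn ⟨k, by dsimp; omega⟩ |>.elim)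
    rw [Even.neg_pow heven]
    ring


lemma key_ball {a : ℕ → ℝ} (ha : ∀ n, 0 ≤ a n) {S : ℝ} (hS : HasSum a S)
    (h1 : a 0 < S) (h2 : S < 2 * a 0) {z : ℂ} (hz : ‖z‖ < 1) {F : ℂ}
    (hF : HasSum (fun n => (a n : ℂ) * z ^ n) F) :
    ‖F - S / 2‖ < S / 2 := by
  have hz0 : 0 ≤ ‖z‖ := norm_nonneg z
  have htail : HasSum (fun n => (a (n + 1) : ℂ) * z ^ (n + 1)) (F - a 0) := by
    have := (hasSum_nat_add_iff' (f := fun n => (a n : ℂ) * z ^ n) 1).mpr hF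
    simpa using this
  have hatail : HasSum (fun n => a (n + 1)) (S - a 0) := by
    have := (hasSum_nat_add_iff' (f := a) 1).mpr hS
    simpa using this
  have hbnd : ∀ n : ℕ, ‖(a (n + 1) : ℂ) * z ^ (n + 1)‖ ≤ a (n + 1) * ‖z‖ := by
    intro n
    rw [norm_mul, norm_pow, Complex.norm_real, Real.norm_eq_abs, abs_of_nonneg (ha _)]
    have : ‖z‖ ^ (n + 1) ≤ ‖z‖ := by
      calc ‖z‖ ^ (n + 1) = ‖z‖ ^ n * ‖z‖ := pow_succ _ _
        _ ≤ 1 * ‖z‖ := by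
            have : ‖z‖ ^ n ≤ 1 := pow_le_one₀ hz0 hz.le
            exact mul_le_mul_of_nonneg_right this hz0
        _ = ‖z‖ := one_mul _
    exact mul_le_mul_of_nonneg_left this (ha _)
  have hsummul : Summable (fun n => a (n + 1) * ‖z‖) := hatail.summable.mul_right _
  have hsumnorm : Summable (fun n => ‖(a (n + 1) : ℂ) * z ^ (n + 1)‖) :=
    Summable.of_nonneg_of_le (fun n => norm_nonneg _) hbnd hsummul
  have hnorm1 : ‖F - (a 0 : ℂ)‖ ≤ (S - a 0) * ‖z‖ := by
    rw [← htail.tsum_eq]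
    calc ‖∑' n, (a (n + 1) : ℂ) * z ^ (n + 1)‖ ≤ ∑' n, ‖(a (n + 1) : ℂ) * z ^ (n + 1)‖ :=
          norm_tsum_le_tsum_norm hsumnorm
      _ ≤ ∑' n, a (n + 1) * ‖z‖ := Summable.tsum_le_tsum hbnd hsumnorm hsummul
      _ = (S - a 0) * ‖z‖ := (hatail.mul_right _).tsum_eq
  have hSa : 0 < S - a 0 := by linarith
  calc ‖F - S / 2‖ = ‖(F - (a 0 : ℂ)) + ((a 0 : ℂ) - S / 2)‖ := by ring_nf
    _ ≤ ‖F - (a 0 : ℂ)‖ + ‖((a 0 : ℂ) - S / 2)‖ := norm_add_le _ _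
    _ ≤ (S - a 0) * ‖z‖ + (a 0 - S / 2) := by
        have : ((a 0 : ℂ) - (S : ℂ) / 2) = ((a 0 - S / 2 : ℝ) : ℂ) := by push_cast; ring
        rw [this, Complex.norm_real, Real.norm_eq_abs, abs_of_nonneg (by linarith)]
        exact add_le_add_left hnorm1 _
    _ < (S - a 0) * 1 + (a 0 - S / 2) := by
        exact add_lt_add_left (by exact mul_lt_mul_of_pos_left hz hSa) _
    _ = S / 2 := by ring

lemma ball_props {F : ℂ} {S : ℝ} (hS : 0 < S) (h : ‖F - S / 2‖ < S / 2) :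
    0 < F.re ∧ ‖F‖ < S ∧ F ≠ 0 ∧ 1 / S < (F⁻¹).re := by
  have hne : F ≠ 0 := by
    intro h0
    rw [h0] at h
    simp only [zero_sub, norm_neg] at h
    rw [show ((S : ℝ) : ℂ) / 2 = ((S / 2 : ℝ) : ℂ) by push_cast; ring] at h
    rw [Complex.norm_real, Real.norm_eq_abs, abs_of_pos (by linarith)] at h
    linarith
  have hsq : Complex.normSq (F - S / 2) < (S / 2) ^ 2 := by
    have := Complex.sq_norm (F - S / 2)
    have h2 : ‖F - S / 2‖ ^ 2 < (S / 2) ^ 2 := by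
      apply pow_lt_pow_left₀ h (norm_nonneg _)
      omega
    calc Complex.normSq (F - S / 2) = ‖F - S / 2‖ ^ 2 := by
          rw [Complex.sq_norm]
      _ < (S / 2) ^ 2 := h2
  have hexp : Complex.normSq (F - S / 2) = Complex.normSq F - S * F.re + (S / 2) ^ 2 := by
    simp only [Complex.normSq_apply, Complex.sub_re, Complex.sub_im]
    have : ((S : ℂ) / 2).re = S / 2 := by
      simp [Complex.div_re]
    have him : ((S : ℂ) / 2).im = 0 := by
      simp [Complex.div_im]
    rw [this, him]
    ring
  have hkey : Complex.normSq F < S * F.re := by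
    rw [hexp] at hsq; linarith
  have hnsq : 0 < Complex.normSq F := Complex.normSq_pos.mpr hne
  have hre : 0 < F.re := by
    nlinarith
  refine ⟨hre, ?_, hne, ?_⟩
  · calc ‖F‖ = ‖(F - S / 2) + (S / 2 : ℂ)‖ := by ring_nf
      _ ≤ ‖F - S / 2‖ + ‖((S : ℂ) / 2)‖ := norm_add_le _ _
      _ < S / 2 + S / 2 := by
          apply add_lt_add_of_lt_of_le h
          rw [show ((S : ℝ) : ℂ) / 2 = ((S / 2 : ℝ) : ℂ) by push_cast; ring]
          rw [Complex.norm_real, Real.norm_eq_abs, abs_of_pos (by linarith)]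
      _ = S := by ring
  · rw [Complex.inv_re]
    rw [div_lt_div_iff₀ hS hnsq] at *
    nlinarith


lemma exp_facts : 2.7182818283 < Real.exp 1 ∧ Real.exp 1 < 2.7182818286 :=
  ⟨Real.exp_one_gt_d9, Real.exp_one_lt_d9⟩

lemma sinh_two_bounds : 2 < Real.sinh 2 ∧ Real.sinh 2 < 4 := by
  obtain ⟨e1, e2⟩ := exp_facts
  have he2 : Real.exp 2 = Real.exp 1 * Real.exp 1 := by
    rw [← Real.exp_add]; norm_num
  have hen : Real.exp (-2) = (Real.exp 2)⁻¹ := Real.exp_neg 2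
  have hpos : 0 < Real.exp 2 := Real.exp_pos 2
  have hinv : Real.exp (-2) * Real.exp 2 = 1 := by
    rw [hen]; field_simp
  have hlow : 7.38 < Real.exp 2 := by nlinarith
  have hhigh : Real.exp 2 < 7.39 := by nlinarith
  have hneg_pos : 0 < Real.exp (-2) := Real.exp_pos _
  have hneg_lt : Real.exp (-2) < 0.14 := by nlinarith
  rw [Real.sinh_eq]
  constructor <;> nlinarith

lemma cosh_one_bounds : 1 < Real.cosh 1 ∧ Real.cosh 1 < 2 := by
  obtain ⟨e1, e2⟩ := exp_facts
  have hinv : Real.exp (-1) * Real.exp 1 = 1 := by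
    rw [Real.exp_neg]; field_simp
  have hpos : 0 < Real.exp (-1) := Real.exp_pos _
  have hlt : Real.exp (-1) < 0.37 := by nlinarith
  rw [Real.cosh_eq]
  constructor <;> nlinarith

lemma hasSum_coshReal : HasSum (fun n : ℕ => 1 / ((2 * n).factorial : ℝ)) (Real.cosh 1) := by
  have h := hasSum_cosh' (1 : ℂ)
  have heq : (fun n : ℕ => (1 : ℂ) ^ (2 * n) / ((2 * n).factorial : ℂ))
      = fun n : ℕ => ((1 / ((2 * n).factorial : ℝ) : ℝ) : ℂ) := by
    funext n; push_cast; simp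
  rw [heq, show (1 : ℂ) = ((1 : ℝ) : ℂ) by norm_num, ← Complex.ofReal_cosh] at h
  exact Complex.hasSum_ofReal.mp h

lemma hasSum_sinhReal : HasSum (fun n : ℕ => 2 * 4 ^ n / ((2 * n + 1).factorial : ℝ)) (Real.sinh 2) := by
  have h := hasSum_sinh' (2 : ℂ)
  have heq : (fun n : ℕ => (2 : ℂ) ^ (2 * n + 1) / ((2 * n + 1).factorial : ℂ))
      = fun n : ℕ => ((2 * 4 ^ n / ((2 * n + 1).factorial : ℝ) : ℝ) : ℂ) := by
    funext n
    have : (2 : ℂ) ^ (2 * n + 1) = 2 * 4 ^ n := by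
      rw [pow_succ, pow_mul]; norm_num; ring
    rw [this]; push_cast; ring
  rw [heq, show (2 : ℂ) = ((2 : ℝ) : ℂ) by norm_num, ← Complex.ofReal_sinh] at h
  exact Complex.hasSum_ofReal.mp h

theorem re_bound_eta (η : ℝ)
    (hη : -(1 / 2 + 1 / Real.sinh 2) / Real.cosh 1 ≤ η) :
    ∀ z ∈ ball (0:ℂ) 1, -(1 / 2) < ((η : ℂ) * coshSqrt z + sqrtCsch z).re := by
  intro z hzball
  have hz : ‖z‖ < 1 := by simpa [dist_zero_right] using mem_ball.mp hzball
  have hz0 : 0 ≤ ‖z‖ := norm_nonneg z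
  have hznpow : ∀ n : ℕ, ‖z ^ n‖ ≤ 1 := fun n => by
    rw [norm_pow]; exact pow_le_one₀ hz0 hz.le
  obtain ⟨hs2, hs4⟩ := sinh_two_bounds
  obtain ⟨hc1, hc2⟩ := cosh_one_bounds
  have hcoshpos : (0 : ℝ) < Real.cosh 1 := by linarith
  have hsinhpos : (0 : ℝ) < Real.sinh 2 := by linarith
  -- the cosh series
  set aC : ℕ → ℝ := fun n => 1 / ((2 * n).factorial : ℝ) with haC
  have haCpos : ∀ n, 0 ≤ aC n := fun n => by positivity
  have haC0 : aC 0 = 1 := by simp [haC]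
  have hCsummable : Summable (fun n : ℕ => (aC n : ℂ) * z ^ n) := by
    apply Summable.of_norm
    apply Summable.of_nonneg_of_le (fun n => norm_nonneg _) _ hasSum_coshReal.summable
    intro n
    rw [norm_mul, Complex.norm_real, Real.norm_eq_abs, abs_of_nonneg (haCpos n)]
    calc aC n * ‖z ^ n‖ ≤ aC n * 1 := mul_le_mul_of_nonneg_left (hznpow n) (haCpos n)
      _ = aC n := mul_one _
  have hCeq : (fun n : ℕ => (aC n : ℂ) * z ^ n) = fun n : ℕ => z ^ n / ((2 * n).factorial : ℂ) := by
    funext n; simp [haC]; push_cast; ring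
  have hC : HasSum (fun n : ℕ => (aC n : ℂ) * z ^ n) (coshSqrt z) := by
    have := hCsummable.hasSum
    rwa [show ∑' n : ℕ, (aC n : ℂ) * z ^ n = coshSqrt z by rw [coshSqrt]; rw [← hCeq]] at this
  have hCball : ‖coshSqrt z - (Real.cosh 1) / 2‖ < (Real.cosh 1) / 2 := by
    apply key_ball haCpos hasSum_coshReal _ _ hz hC
    · rw [haC0]; linarith
    · rw [haC0]; linarith
  obtain ⟨hCre, hCnorm, -, -⟩ := ball_props hcoshpos hCball
  -- the sinh-based series
  set aH : ℕ → ℝ := fun n => 2 * 4 ^ n / ((2 * n + 1).factorial : ℝ) with haH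
  have haHpos : ∀ n, 0 ≤ aH n := fun n => by positivity
  have haH0 : aH 0 = 2 := by simp [haH]
  have hHsummable : Summable (fun n : ℕ => (aH n : ℂ) * z ^ n) := by
    apply Summable.of_norm
    apply Summable.of_nonneg_of_le (fun n => norm_nonneg _) _ hasSum_sinhReal.summable
    intro n
    rw [norm_mul, Complex.norm_real, Real.norm_eq_abs, abs_of_nonneg (haHpos n)]
    calc aH n * ‖z ^ n‖ ≤ aH n * 1 := mul_le_mul_of_nonneg_left (hznpow n) (haHpos n)
      _ = aH n := mul_one _
  set H : ℂ := ∑' n : ℕ, (aH n : ℂ) * z ^ n with hHdef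
  have hH : HasSum (fun n : ℕ => (aH n : ℂ) * z ^ n) H := hHsummable.hasSum
  have hHball : ‖H - (Real.sinh 2) / 2‖ < (Real.sinh 2) / 2 := by
    apply key_ball haHpos hasSum_sinhReal _ _ hz hH
    · rw [haH0]; linarith
    · rw [haH0]; linarith
  obtain ⟨-, -, hHne, hHinv⟩ := ball_props hsinhpos hHball
  -- sqrtCsch z = H⁻¹
  have hsq : sqrtCsch z = H⁻¹ := by
    by_cases hz0' : z = 0
    · subst hz0'
      have : H = 2 := by
        rw [hHdef]
        rw [tsum_eq_single 0]
        · simp [haH0]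
        · intro n hn
          simp [zero_pow hn]
      rw [this, sqrtCsch]
      norm_num
    · set w : ℂ := z ^ (1 / 2 : ℂ) with hwdef
      have hw2 : w ^ 2 = z := by
        rw [hwdef, show (1 / 2 : ℂ) = ((2 : ℕ) : ℂ)⁻¹ by norm_num]
        exact Complex.cpow_nat_inv_pow z two_ne_zero
      have hw0 : w ≠ 0 := by
        intro h0
        apply hz0'
        rw [← hw2, h0]; ring
      have hsinh : Complex.sinh (2 * w) = w * H := by
        have h1 := hasSum_sinh' (2 * w)
        have heq : (fun n : ℕ => (2 * w) ^ (2 * n + 1) / ((2 * n + 1).factorial : ℂ))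
            = fun n : ℕ => w * ((aH n : ℂ) * z ^ n) := by
          funext n
          have : (2 * w) ^ (2 * n + 1) = 2 * 4 ^ n * w * (w ^ 2) ^ n := by
            rw [mul_pow, pow_succ, pow_mul]
            norm_num; ring
          rw [this, hw2]
          simp [haH]
          push_cast
          field_simp
        rw [heq] at h1
        exact h1.unique (hH.mul_left w)
      rw [sqrtCsch, if_neg hz0', ← hwdef, hsinh]
      field_simp
  -- conclusion
  rw [hsq]
  have hre : ((η : ℂ) * coshSqrt z + H⁻¹).re = η * (coshSqrt z).re + (H⁻¹).re := by
    simp [Complex.add_re, Complex.mul_re]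
  rw [hre]
  have hClere : (coshSqrt z).re ≤ ‖coshSqrt z‖ := Complex.re_le_norm _
  rcases le_or_gt 0 η with hη0 | hη0
  · have h1 : 0 ≤ η * (coshSqrt z).re := mul_nonneg hη0 hCre.le
    have h2 : 0 < 1 / Real.sinh 2 := by positivity
    linarith
  · have hηcosh : -(1 / 2 + 1 / Real.sinh 2) ≤ η * Real.cosh 1 := by
      rw [div_le_iff₀ hcoshpos] at hη
      linarith [hη]
    have h1 : η * Real.cosh 1 < η * ‖coshSqrt z‖ :=
      (mul_lt_mul_left_of_neg hη0).mpr hCnorm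
    have h2 : η * ‖coshSqrt z‖ ≤ η * (coshSqrt z).re := by
      apply mul_le_mul_of_nonpos_left hClere hη0.le
    have h3 : 1 / Real.sinh 2 < (H⁻¹).re := hHinv
    linarith
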